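/- arXiv:0709.3347 — 2 statements merged into one kernel-verified Lean document; each statement's English description precedes it below -/
import Mathlib

section
/- Suppose φ is an analytic self-map of the unit disk D, u ∈ H(D), 0<p<∞ and ω is normal on [0,1). Then lim_{|z|→1} (1−|z|²)|u'(z)| / (ω(|φ(z)|)(1−|φ(z)|²)^{1/p}) = 0 if and only if both: lim_{|φ(z)|→1} (1−|z|²)|u'(z)| / (ω(|φ(z)|)(1−|φ(z)|²)^{1/p}) = 0 and u ∈ B₀. -/
open MeasureTheory Complex Filter

noncomputable section

/-- The open unit disk in the complex plane. -/
def unitDisk : Set ℂ := Metric.ball 0 1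

/-- `ω` is a normal function with parameters `0 < s < t`:
`ω` is positive and continuous on `[0,1)`, `ω r / (1-r)^s` decreases to `0`
and `ω r / (1-r)^t` increases to `∞` as `r → 1⁻`. -/
def IsNormalWith (ω : ℝ → ℝ) (s t : ℝ) : Prop :=
  0 < s ∧ s < t ∧
  ContinuousOn ω (Set.Ico 0 1) ∧
  (∀ r ∈ Set.Ico (0:ℝ) 1, 0 < ω r) ∧
  (∀ r₁ ∈ Set.Ico (0:ℝ) 1, ∀ r₂ ∈ Set.Ico (0:ℝ) 1, r₁ ≤ r₂ →
    ω r₂ / (1 - r₂) ^ s ≤ ω r₁ / (1 - r₁) ^ s) ∧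
  Filter.Tendsto (fun r => ω r / (1 - r) ^ s) (nhdsWithin 1 (Set.Ico 0 1)) (nhds 0) ∧
  (∀ r₁ ∈ Set.Ico (0:ℝ) 1, ∀ r₂ ∈ Set.Ico (0:ℝ) 1, r₁ ≤ r₂ →
    ω r₁ / (1 - r₁) ^ t ≤ ω r₂ / (1 - r₂) ^ t) ∧
  Filter.Tendsto (fun r => ω r / (1 - r) ^ t) (nhdsWithin 1 (Set.Ico 0 1)) Filter.atTop

/-- `ω` is a normal function. -/
def IsNormal (ω : ℝ → ℝ) : Prop := ∃ s t : ℝ, IsNormalWith ω s t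

/-- `φ` is an analytic self-map of the unit disk. -/
def IsAnalyticSelfMap (φ : ℂ → ℂ) : Prop :=
  DifferentiableOn ℂ φ unitDisk ∧ Set.MapsTo φ unitDisk unitDisk

/-- The (unnormalized) integral `∫_D |f|^p ω(|z|)^p/(1-|z|) dA`. -/
def bergmanIntegral (p : ℝ) (ω : ℝ → ℝ) (f : ℂ → ℂ) : ENNReal :=
  ∫⁻ z in unitDisk,
    ENNReal.ofReal (‖f z‖ ^ p * ω (‖z‖) ^ p / (1 - ‖z‖))

/-- Membership in the Bergman-type space `H(p,p,ω)`. -/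
def MemBergmanType (p : ℝ) (ω : ℝ → ℝ) (f : ℂ → ℂ) : Prop :=
  DifferentiableOn ℂ f unitDisk ∧ bergmanIntegral p ω f < ⊤

/-- The norm on `H(p,p,ω)` (the factor `π⁻¹` normalizes the area measure so `A(D) = 1`). -/
def bergmanTypeNorm (p : ℝ) (ω : ℝ → ℝ) (f : ℂ → ℂ) : ℝ :=
  (Real.pi⁻¹ * (bergmanIntegral p ω f).toReal) ^ (1 / p)

/-- The (unnormalized) integral `∫_D |f|^p dA`. -/
def apIntegral (p : ℝ) (f : ℂ → ℂ) : ENNReal :=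
  ∫⁻ z in unitDisk, ENNReal.ofReal (‖f z‖ ^ p)

/-- Membership in the Bergman space `A^p`. -/
def MemAp (p : ℝ) (f : ℂ → ℂ) : Prop :=
  DifferentiableOn ℂ f unitDisk ∧ apIntegral p f < ⊤

/-- The norm on `A^p` (with the normalized area measure). -/
def apNorm (p : ℝ) (f : ℂ → ℂ) : ℝ :=
  (Real.pi⁻¹ * (apIntegral p f).toReal) ^ (1 / p)

/-- Membership in the Bloch space `B`. -/
def MemBloch (f : ℂ → ℂ) : Prop :=
  DifferentiableOn ℂ f unitDisk ∧
  ∃ M : ℝ, ∀ z ∈ unitDisk, (1 - ‖z‖ ^ 2) * ‖deriv f z‖ ≤ M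

/-- The Bloch norm `‖f‖_B = |f(0)| + sup_{z∈D} (1-|z|²)|f'(z)|`. -/
def blochNorm (f : ℂ → ℂ) : ℝ :=
  ‖f 0‖ +
    ⨆ z : unitDisk, (1 - ‖z.1‖ ^ 2) * ‖deriv f z.1‖

/-- Membership in the little Bloch space `B₀`. -/
def MemLittleBloch (f : ℂ → ℂ) : Prop :=
  MemBloch f ∧
  ∀ ε : ℝ, 0 < ε → ∃ r ∈ Set.Ioo (0:ℝ) 1, ∀ z ∈ unitDisk,
    r < ‖z‖ → (1 - ‖z‖ ^ 2) * ‖deriv f z‖ < ε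

/-- The weighted composition operator `uC_φ f = u ⬝ (f ∘ φ)`. -/
def wComp (u φ : ℂ → ℂ) (f : ℂ → ℂ) : ℂ → ℂ := fun z => u z * f (φ z)

/-- The composition operator `C_φ f = f ∘ φ`. -/
def compOp (φ : ℂ → ℂ) (f : ℂ → ℂ) : ℂ → ℂ := fun z => f (φ z)

/-- The sequence `F` converges to `0` uniformly on compact subsets of the unit disk. -/
def TendstoZeroOnCompacts (F : ℕ → ℂ → ℂ) : Prop :=
  ∀ K : Set ℂ, K ⊆ unitDisk → IsCompact K →
    TendstoUniformlyOn F (fun _ => 0) Filter.atTop K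

/-- The operator `T` is bounded from the space with membership predicate `S` and norm `N`
into the Bloch-type space with membership predicate `Tgt` (normed by the Bloch norm). -/
def OpBounded (S : (ℂ → ℂ) → Prop) (N : (ℂ → ℂ) → ℝ) (Tgt : (ℂ → ℂ) → Prop)
    (T : (ℂ → ℂ) → ℂ → ℂ) : Prop :=
  (∀ f, S f → Tgt (T f)) ∧
  ∃ C : ℝ, 0 < C ∧ ∀ f, S f → blochNorm (T f) ≤ C * N f

/-- The operator `T` is compact: it is bounded and maps bounded sequences converging to `0`
uniformly on compacta to sequences converging to `0` in Bloch norm. -/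
def OpCompact (S : (ℂ → ℂ) → Prop) (N : (ℂ → ℂ) → ℝ) (Tgt : (ℂ → ℂ) → Prop)
    (T : (ℂ → ℂ) → ℂ → ℂ) : Prop :=
  OpBounded S N Tgt T ∧
  ∀ F : ℕ → ℂ → ℂ, (∀ n, S (F n)) → (∃ M : ℝ, ∀ n, N (F n) ≤ M) →
    TendstoZeroOnCompacts F →
    Filter.Tendsto (fun n => blochNorm (T (F n))) Filter.atTop (nhds 0)

/-- `lim_{|φ(z)|→1} E(z) = 0`. -/
def LimPhiBoundaryZero (φ : ℂ → ℂ) (E : ℂ → ℝ) : Prop :=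
  ∀ ε : ℝ, 0 < ε → ∃ δ ∈ Set.Ioo (0:ℝ) 1, ∀ z ∈ unitDisk,
    δ < ‖φ z‖ → E z < ε

/-- `lim_{|z|→1} E(z) = 0`. -/
def LimBoundaryZero (E : ℂ → ℝ) : Prop :=
  ∀ ε : ℝ, 0 < ε → ∃ r ∈ Set.Ioo (0:ℝ) 1, ∀ z ∈ unitDisk,
    r < ‖z‖ → E z < ε


/-- Points of the unit disk have absolute value less than 1. -/
lemma absLtOne_of_memUnitDisk {z : ℂ} (hz : z ∈ unitDisk) : ‖z‖ < 1 := by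
  simpa [unitDisk, Metric.mem_ball, dist_zero_right] using hz

lemma memUnitDisk_of_absLtOne {z : ℂ} (hz : ‖z‖ < 1) : z ∈ unitDisk := by
  simpa [unitDisk, Metric.mem_ball, dist_zero_right] using hz

lemma derivContinuousOn_unitDisk (u : ℂ → ℂ) (hu : DifferentiableOn ℂ u unitDisk) :
    ContinuousOn (deriv u) unitDisk :=
  ((hu.analyticOnNhd Metric.isOpen_ball).deriv).continuousOn

/-- Lemma 4.2: `lim_{|z|→1}` of the first quantity vanishes iff `lim_{|φ(z)|→1}` vanishes
and `u ∈ B₀`. -/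
theorem lim_boundary_deriv_u_iff (p : ℝ) (hp : 0 < p) (ω : ℝ → ℝ) (hω : IsNormal ω)
    (φ u : ℂ → ℂ) (hφ : IsAnalyticSelfMap φ) (hu : DifferentiableOn ℂ u unitDisk) :
    LimBoundaryZero (fun z =>
        (1 - ‖z‖ ^ 2) * ‖deriv u z‖ /
          (ω (‖φ z‖) * (1 - ‖φ z‖ ^ 2) ^ (1 / p))) ↔
      (LimPhiBoundaryZero φ (fun z =>
          (1 - ‖z‖ ^ 2) * ‖deriv u z‖ /
            (ω (‖φ z‖) * (1 - ‖φ z‖ ^ 2) ^ (1 / p))) ∧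
       MemLittleBloch u) := by
  obtain ⟨s, t, hs, hst, hcont, hωpos, hdec, _, _, _⟩ := hω
  set N : ℂ → ℝ := fun z => (1 - ‖z‖ ^ 2) * ‖deriv u z‖ with hNdef
  set Dn : ℂ → ℝ := fun z =>
    ω (‖φ z‖) * (1 - ‖φ z‖ ^ 2) ^ (1 / p) with hDdef
  have hω0 : 0 < ω 0 := hωpos 0 ⟨le_rfl, one_pos⟩
  have hωle : ∀ r ∈ Set.Ico (0:ℝ) 1, ω r ≤ ω 0 := by
    intro r hr
    have h1 : ω r / (1 - r) ^ s ≤ ω 0 / (1 - 0) ^ s :=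
      hdec 0 ⟨le_rfl, one_pos⟩ r hr hr.1
    have h2 : (0:ℝ) < (1 - r) ^ s := Real.rpow_pos_of_pos (by linarith [hr.2]) s
    have h3 : (1 - r) ^ s ≤ 1 := Real.rpow_le_one (by linarith [hr.2]) (by linarith [hr.1]) hs.le
    have h4 : ω r ≤ ω 0 * (1 - r) ^ s := by
      rw [div_le_iff₀ h2] at h1
      simpa using h1
    nlinarith
  have hφmem : ∀ z ∈ unitDisk, ‖φ z‖ ∈ Set.Ico (0:ℝ) 1 := by
    intro z hz
    exact ⟨norm_nonneg _, absLtOne_of_memUnitDisk (hφ.2 hz)⟩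
  have hsq : ∀ z ∈ unitDisk, 0 < 1 - ‖φ z‖ ^ 2 := by
    intro z hz
    obtain ⟨h0, h1⟩ := hφmem z hz
    nlinarith
  have hDpos : ∀ z ∈ unitDisk, 0 < Dn z := by
    intro z hz
    exact mul_pos (hωpos _ (hφmem z hz)) (Real.rpow_pos_of_pos (hsq z hz) _)
  have hDle : ∀ z ∈ unitDisk, Dn z ≤ ω 0 := by
    intro z hz
    have h1 : (1 - ‖φ z‖ ^ 2) ^ (1 / p) ≤ 1 := by
      refine Real.rpow_le_one (hsq z hz).le ?_ (by positivity)
      have := (hφmem z hz).1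
      nlinarith
    have h2 := hωle _ (hφmem z hz)
    have h3 := (hωpos _ (hφmem z hz)).le
    calc Dn z ≤ ω (‖φ z‖) * 1 := by
          exact mul_le_mul_of_nonneg_left h1 h3
      _ ≤ ω 0 := by simpa using h2
  have hNnonneg : ∀ z ∈ unitDisk, 0 ≤ N z := by
    intro z hz
    have h1 : ‖z‖ < 1 := absLtOne_of_memUnitDisk hz
    have h0 : (0:ℝ) ≤ ‖z‖ := norm_nonneg z
    have : 0 ≤ 1 - ‖z‖ ^ 2 := by nlinarith
    exact mul_nonneg this (norm_nonneg _)
  have hNeq : ∀ z ∈ unitDisk, N z = (N z / Dn z) * Dn z := by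
    intro z hz
    rw [div_mul_cancel₀ _ (hDpos z hz).ne']
  have hNle : ∀ z ∈ unitDisk, N z ≤ (N z / Dn z) * ω 0 := by
    intro z hz
    conv_lhs => rw [hNeq z hz]
    exact mul_le_mul_of_nonneg_left (hDle z hz)
      (div_nonneg (hNnonneg z hz) (hDpos z hz).le)
  constructor
  · intro h
    have hB0 : MemLittleBloch u := by
      refine ⟨⟨hu, ?_⟩, ?_⟩
      · -- boundedness
        obtain ⟨r₁, hr₁, hr₁'⟩ := h 1 one_pos
        have hK : IsCompact (Metric.closedBall (0:ℂ) r₁) := isCompact_closedBall _ _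
        have hKsub : Metric.closedBall (0:ℂ) r₁ ⊆ unitDisk :=
          Metric.closedBall_subset_ball hr₁.2
        have hKne : (Metric.closedBall (0:ℂ) r₁).Nonempty :=
          ⟨0, Metric.mem_closedBall_self hr₁.1.le⟩
        have hNcont : ContinuousOn N (Metric.closedBall (0:ℂ) r₁) := by
          apply ContinuousOn.mul
          · exact (continuous_const.sub (continuous_norm.pow 2)).continuousOn
          · exact (continuous_norm.comp_continuousOn
              ((derivContinuousOn_unitDisk u hu).mono hKsub))
        obtain ⟨z₁, hz₁, hmax⟩ := hK.exists_isMaxOn hKne hNcont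
        refine ⟨max (N z₁) (ω 0), ?_⟩
        intro z hz
        rcases le_or_gt (‖z‖) r₁ with hle | hlt
        · have hzK : z ∈ Metric.closedBall (0:ℂ) r₁ := by
            simpa [Metric.mem_closedBall, dist_zero_right] using hle
          exact le_trans (hmax hzK) (le_max_left _ _)
        · have hE := hr₁' z hz hlt
          have := hNle z hz
          have h2 : (N z / Dn z) * ω 0 ≤ 1 * ω 0 :=
            mul_le_mul_of_nonneg_right hE.le hω0.le
          have h3 : N z ≤ ω 0 := by linarith [this]
          exact le_trans h3 (le_max_right _ _)
      · -- little Bloch limit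
        intro ε hε
        obtain ⟨r, hr, hr'⟩ := h (ε / ω 0) (div_pos hε hω0)
        refine ⟨r, hr, ?_⟩
        intro z hz hrz
        have hE := hr' z hz hrz
        have h1 := hNle z hz
        have h2 : (N z / Dn z) * ω 0 < (ε / ω 0) * ω 0 :=
          mul_lt_mul_of_pos_right hE hω0
        have h3 : (ε / ω 0) * ω 0 = ε := div_mul_cancel₀ _ hω0.ne'
        have : N z < ε := by linarith
        simpa [hNdef] using this
    refine ⟨?_, hB0⟩
    -- LimPhiBoundaryZero
    intro ε hε
    obtain ⟨r, hr, hr'⟩ := h ε hε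
    have hK : IsCompact (Metric.closedBall (0:ℂ) r) := isCompact_closedBall _ _
    have hKsub : Metric.closedBall (0:ℂ) r ⊆ unitDisk := Metric.closedBall_subset_ball hr.2
    have hKne : (Metric.closedBall (0:ℂ) r).Nonempty :=
      ⟨0, Metric.mem_closedBall_self hr.1.le⟩
    have hcφ : ContinuousOn (fun z => ‖φ z‖) (Metric.closedBall (0:ℂ) r) :=
      continuous_norm.comp_continuousOn ((hφ.1.continuousOn).mono hKsub)
    obtain ⟨z₀, hz₀, hmaxφ⟩ := hK.exists_isMaxOn hKne hcφ
    have hφz₀ : ‖φ z₀‖ < 1 := absLtOne_of_memUnitDisk (hφ.2 (hKsub hz₀))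
    refine ⟨max (‖φ z₀‖) r, ⟨lt_max_of_lt_right hr.1, max_lt hφz₀ hr.2⟩, ?_⟩
    intro z hz hgt
    apply hr' z hz
    by_contra hle
    push_neg at hle
    have hzK : z ∈ Metric.closedBall (0:ℂ) r := by
      simpa [Metric.mem_closedBall, dist_zero_right] using hle
    have h1 : ‖φ z‖ ≤ ‖φ z₀‖ := hmaxφ hzK
    have h2 : ‖φ z₀‖ ≤ max (‖φ z₀‖) r := le_max_left _ _
    linarith
  · rintro ⟨hφlim, hlb⟩
    intro ε hε
    obtain ⟨δ, hδ, hδ'⟩ := hφlim ε hε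
    -- lower bound for the denominator when |φ z| ≤ δ
    have hIsub : Set.Icc (0:ℝ) δ ⊆ Set.Ico (0:ℝ) 1 := fun x hx => ⟨hx.1, lt_of_le_of_lt hx.2 hδ.2⟩
    have hIcomp : IsCompact (Set.Icc (0:ℝ) δ) := isCompact_Icc
    have hIne : (Set.Icc (0:ℝ) δ).Nonempty := ⟨0, le_rfl, hδ.1.le⟩
    obtain ⟨t₀, ht₀, hmin⟩ := hIcomp.exists_isMinOn hIne (hcont.mono hIsub)
    have hm₀ : 0 < ω t₀ := hωpos t₀ (hIsub ht₀)
    set c : ℝ := (1 - δ ^ 2) ^ (1 / p) with hc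
    have hδsq : (0:ℝ) < 1 - δ ^ 2 := by nlinarith [hδ.1, hδ.2]
    have hcpos : 0 < c := Real.rpow_pos_of_pos hδsq _
    have hDlow : ∀ z ∈ unitDisk, ‖φ z‖ ≤ δ → ω t₀ * c ≤ Dn z := by
      intro z hz hle
      have h1 : ω t₀ ≤ ω (‖φ z‖) := hmin ⟨(hφmem z hz).1, hle⟩
      have h2 : c ≤ (1 - ‖φ z‖ ^ 2) ^ (1 / p) := by
        apply Real.rpow_le_rpow hδsq.le ?_ (by positivity)
        have := (hφmem z hz).1
        nlinarith
      exact mul_le_mul h1 h2 hcpos.le (hωpos _ (hφmem z hz)).le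
    obtain ⟨r, hr, hr'⟩ := hlb.2 (ε * (ω t₀ * c)) (by positivity)
    refine ⟨r, hr, ?_⟩
    intro z hz hrz
    rcases le_or_gt (‖φ z‖) δ with hle | hlt
    · have hNz : N z < ε * (ω t₀ * c) := hr' z hz hrz
      have hDz := hDlow z hz hle
      have hDp := hDpos z hz
      show N z / Dn z < ε
      rw [div_lt_iff₀ hDp]
      calc N z < ε * (ω t₀ * c) := hNz
        _ ≤ ε * Dn z := mul_le_mul_of_nonneg_left hDz hε.le
    · exact hδ' z hz hlt


end
end

section
/- Suppose φ is an analytic self-map of the unit disk D, u ∈ H(D), 0<p<∞ and ω is normal on [0,1). Then lim_{|z|→1} (1−|z|²)|u(z)φ'(z)| / (ω(|φ(z)|)(1−|φ(z)|²)^{1+1/p}) = 0 if and only if both: lim_{|φ(z)|→1} (1−|z|²)|u(z)φ'(z)| / (ω(|φ(z)|)(1−|φ(z)|²)^{1+1/p}) = 0 and lim_{|z|→1} (1−|z|²)|u(z)φ'(z)| = 0. -/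
open MeasureTheory Complex Filter

noncomputable section

/-- Lemma 4.3: `lim_{|z|→1}` of the second quantity vanishes iff `lim_{|φ(z)|→1}` vanishes
and `(1-|z|²)|u(z)φ'(z)| → 0` as `|z| → 1`. -/
theorem lim_boundary_u_deriv_phi_iff (p : ℝ) (hp : 0 < p) (ω : ℝ → ℝ) (hω : IsNormal ω)
    (φ u : ℂ → ℂ) (hφ : IsAnalyticSelfMap φ) (hu : DifferentiableOn ℂ u unitDisk) :
    LimBoundaryZero (fun z =>
        (1 - ‖z‖ ^ 2) * ‖u z * deriv φ z‖ /
          (ω (‖φ z‖) * (1 - ‖φ z‖ ^ 2) ^ (1 + 1 / p))) ↔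
      (LimPhiBoundaryZero φ (fun z =>
          (1 - ‖z‖ ^ 2) * ‖u z * deriv φ z‖ /
            (ω (‖φ z‖) * (1 - ‖φ z‖ ^ 2) ^ (1 + 1 / p))) ∧
       LimBoundaryZero (fun z =>
          (1 - ‖z‖ ^ 2) * ‖u z * deriv φ z‖)) := by
  obtain ⟨s, t, hs, hst, hcont, hpos, hdec, -, -, -⟩ := hω
  set e : ℝ := 1 + 1/p with he
  have he0 : 0 < e := by positivity
  have habs : ∀ z ∈ unitDisk, ‖z‖ < 1 := by
    intro z hz
    simpa [unitDisk, Metric.mem_ball, Complex.dist_eq] using hz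
  have hωb : ∀ r ∈ Set.Ico (0:ℝ) 1, ω r ≤ ω 0 := by
    intro r hr
    have h1r : 0 < 1 - r := by linarith [hr.2]
    have hd := hdec 0 ⟨le_rfl, zero_lt_one⟩ r hr hr.1
    rw [show (1:ℝ) - 0 = 1 by ring, Real.one_rpow, div_one] at hd
    have hle1 : (1 - r) ^ s ≤ 1 := Real.rpow_le_one h1r.le (by linarith [hr.1]) hs.le
    have hrp : 0 < (1 - r) ^ s := Real.rpow_pos_of_pos h1r s
    rw [div_le_iff₀ hrp] at hd
    calc ω r ≤ ω 0 * (1 - r) ^ s := hd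
      _ ≤ ω 0 * 1 := by
          have := hpos 0 ⟨le_rfl, zero_lt_one⟩
          exact mul_le_mul_of_nonneg_left hle1 this.le
      _ = ω 0 := mul_one _
  have key : ∀ z ∈ unitDisk,
      0 < ω (‖φ z‖) * (1 - ‖φ z‖ ^ 2) ^ e ∧
        ω (‖φ z‖) * (1 - ‖φ z‖ ^ 2) ^ e ≤ ω 0 := by
    intro z hz
    have hφz : ‖φ z‖ < 1 := habs _ (hφ.2 hz)
    have hφz0 : (0:ℝ) ≤ ‖φ z‖ := norm_nonneg _
    have h1 : 0 < 1 - ‖φ z‖ ^ 2 := by nlinarith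
    have hωp : 0 < ω (‖φ z‖) := hpos _ ⟨hφz0, hφz⟩
    have hrp : 0 < (1 - ‖φ z‖ ^ 2) ^ e := Real.rpow_pos_of_pos h1 e
    refine ⟨mul_pos hωp hrp, ?_⟩
    have h2 : (1 - ‖φ z‖ ^ 2) ^ e ≤ 1 :=
      Real.rpow_le_one h1.le (by nlinarith) he0.le
    calc ω (‖φ z‖) * (1 - ‖φ z‖ ^ 2) ^ e
        ≤ ω (‖φ z‖) * 1 := mul_le_mul_of_nonneg_left h2 hωp.le
      _ = ω (‖φ z‖) := mul_one _
      _ ≤ ω 0 := hωb _ ⟨hφz0, hφz⟩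
  have hnum_nonneg : ∀ z ∈ unitDisk,
      0 ≤ (1 - ‖z‖ ^ 2) * ‖u z * deriv φ z‖ := by
    intro z hz
    have := habs z hz
    have h0 : (0:ℝ) ≤ ‖z‖ := norm_nonneg _
    exact mul_nonneg (by nlinarith) (norm_nonneg _)
  constructor
  · intro h
    constructor
    · intro ε hε
      obtain ⟨r, hr, hr2⟩ := h ε hε
      have hKc : IsCompact (Metric.closedBall (0:ℂ) r) := isCompact_closedBall _ _
      have hKsub : Metric.closedBall (0:ℂ) r ⊆ unitDisk := by
        intro z hz
        simp only [Metric.mem_closedBall] at hz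
        simp only [unitDisk, Metric.mem_ball]
        exact lt_of_le_of_lt hz hr.2
      have hcφ : ContinuousOn (fun z => ‖φ z‖) (Metric.closedBall 0 r) :=
        continuous_norm.comp_continuousOn ((hφ.1.continuousOn).mono hKsub)
      obtain ⟨z₀, hz₀, hmax⟩ := hKc.exists_isMaxOn
        ⟨0, by simp [hr.1.le]⟩ hcφ
      have hρ1 : ‖φ z₀‖ < 1 := habs _ (hφ.2 (hKsub hz₀))
      refine ⟨max (‖φ z₀‖) (1/2),
        ⟨lt_of_lt_of_le (by norm_num) (le_max_right _ _), max_lt hρ1 (by norm_num)⟩, ?_⟩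
      intro z hz hδ
      have hrz : r < ‖z‖ := by
        by_contra hcon
        push_neg at hcon
        have hzK : z ∈ Metric.closedBall (0:ℂ) r := by
          simpa [Metric.mem_closedBall, Complex.dist_eq] using hcon
        have := le_trans (hmax hzK) (le_max_left (‖φ z₀‖) (1/2))
        linarith
      exact hr2 z hz hrz
    · intro ε hε
      have hω0 : 0 < ω 0 := hpos 0 ⟨le_rfl, zero_lt_one⟩
      obtain ⟨r, hr, hr2⟩ := h (ε / ω 0) (by positivity)
      refine ⟨r, hr, fun z hz hrz => ?_⟩
      have hd := key z hz
      have hE := hr2 z hz hrz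
      show (1 - ‖z‖ ^ 2) * ‖u z * deriv φ z‖ < ε
      have heq : (1 - ‖z‖ ^ 2) * ‖u z * deriv φ z‖
          = (1 - ‖z‖ ^ 2) * ‖u z * deriv φ z‖ /
              (ω (‖φ z‖) * (1 - ‖φ z‖ ^ 2) ^ e) *
              (ω (‖φ z‖) * (1 - ‖φ z‖ ^ 2) ^ e) :=
        (div_mul_cancel₀ _ hd.1.ne').symm
      rw [heq]
      have hEnn : 0 ≤ (1 - ‖z‖ ^ 2) * ‖u z * deriv φ z‖ /
          (ω (‖φ z‖) * (1 - ‖φ z‖ ^ 2) ^ e) :=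
        div_nonneg (hnum_nonneg z hz) hd.1.le
      calc _ ≤ (1 - ‖z‖ ^ 2) * ‖u z * deriv φ z‖ /
              (ω (‖φ z‖) * (1 - ‖φ z‖ ^ 2) ^ e) * ω 0 :=
            mul_le_mul_of_nonneg_left hd.2 hEnn
        _ < ε / ω 0 * ω 0 := mul_lt_mul_of_pos_right hE hω0
        _ = ε := div_mul_cancel₀ _ hω0.ne'
  · rintro ⟨h1, h2⟩ ε hε
    obtain ⟨δ, hδ, hδ2⟩ := h1 ε hε
    have hIsub : Set.Icc (0:ℝ) δ ⊆ Set.Ico 0 1 :=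
      fun x hx => ⟨hx.1, lt_of_le_of_lt hx.2 hδ.2⟩
    obtain ⟨r₀, hr₀, hmin⟩ := (isCompact_Icc).exists_isMinOn
      ⟨0, ⟨le_rfl, hδ.1.le⟩⟩ (hcont.mono hIsub)
    have hm : 0 < ω r₀ := hpos r₀ (hIsub hr₀)
    have hδ2lt : δ ^ 2 < 1 := by nlinarith [hδ.1, hδ.2]
    have hc : 0 < ω r₀ * (1 - δ ^ 2) ^ e := by
      have : 0 < (1 - δ ^ 2) ^ e := Real.rpow_pos_of_pos (by linarith) e
      positivity
    obtain ⟨r, hr, hr2⟩ := h2 (ε * (ω r₀ * (1 - δ ^ 2) ^ e)) (by positivity)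
    refine ⟨r, hr, fun z hz hrz => ?_⟩
    by_cases hcase : δ < ‖φ z‖
    · exact hδ2 z hz hcase
    · push_neg at hcase
      have hnum := hr2 z hz hrz
      have hφz : ‖φ z‖ < 1 := habs _ (hφ.2 hz)
      have hφz0 : (0:ℝ) ≤ ‖φ z‖ := norm_nonneg _
      have hdenpos := (key z hz).1
      have hden_ge : ω r₀ * (1 - δ ^ 2) ^ e ≤
          ω (‖φ z‖) * (1 - ‖φ z‖ ^ 2) ^ e := by
        apply mul_le_mul (hmin ⟨hφz0, hcase⟩)
          (Real.rpow_le_rpow (by linarith) (by nlinarith) he0.le)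
          (Real.rpow_nonneg (by linarith) e) (hpos _ ⟨hφz0, hφz⟩).le
      show (1 - ‖z‖ ^ 2) * ‖u z * deriv φ z‖ /
          (ω (‖φ z‖) * (1 - ‖φ z‖ ^ 2) ^ e) < ε
      rw [div_lt_iff₀ hdenpos]
      calc (1 - ‖z‖ ^ 2) * ‖u z * deriv φ z‖
          < ε * (ω r₀ * (1 - δ ^ 2) ^ e) := hnum
        _ ≤ ε * (ω (‖φ z‖) * (1 - ‖φ z‖ ^ 2) ^ e) :=
            mul_le_mul_of_nonneg_left hden_ge hε.le

end
end
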